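/- Let 0 < d < n be integers and let a: ℝ^d → ℝ^{n−d} be Lipschitz with Lip(a) ≤ δ, where δ > 0 is sufficiently small. Let A(t) = (t, a(t)), let E' ⊆ A(ℝ^d), and let F' = A^{-1}(E'). Suppose t₀ ∈ ℝ^d is a Lebesgue density point of F', that a is differentiable at t₀ with derivative da(t₀) = 0, and set x₀ = A(t₀) (so the tangent plane to the graph of a at x₀ is the d-plane through x₀ parallel to ℝ^d × {0}). Fix ε > 0 and for 1 ≤ i ≤ d set L_i = {x₀ + s e_i : s ∈ ℝ}, where e_1, …, e_d span ℝ^d × {0}. Then there is a constant C depending only on n such that for all sufficiently small r > 0 there exist points y_1, …, y_d ∈ (B(x₀, r) \ B(x₀, r/4)) ∩ E' with dist(y_i, L_i) ≤ C ε r for each 1 ≤ i ≤ d. -/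

import Mathlib

open Set Metric MeasureTheory Filter Topology

noncomputable abbrev GraphSpace (d m : ℕ) :=
  WithLp 2 (EuclideanSpace ℝ (Fin d) × EuclideanSpace ℝ (Fin m))

/-- The graph map `A(t) = (t, a(t))`. -/
noncomputable def graphMap {d m : ℕ} (a : EuclideanSpace ℝ (Fin d) → EuclideanSpace ℝ (Fin m))
    (t : EuclideanSpace ℝ (Fin d)) : GraphSpace d m :=
  (WithLp.equiv 2 (EuclideanSpace ℝ (Fin d) × EuclideanSpace ℝ (Fin m))).symm (t, a t)

set_option maxHeartbeats 2000000 in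
theorem stmt7 (d m : ℕ) (hd : 0 < d) (hm : 0 < m) :
    ∃ C : ℝ, 0 < C ∧ ∃ δ₀ : ℝ, 0 < δ₀ ∧
      ∀ (δ : ℝ), 0 < δ → δ ≤ δ₀ →
      ∀ (a : EuclideanSpace ℝ (Fin d) → EuclideanSpace ℝ (Fin m)),
        LipschitzWith (Real.toNNReal δ) a →
      ∀ (E' : Set (GraphSpace d m)), E' ⊆ Set.range (graphMap a) →
      ∀ (t₀ : EuclideanSpace ℝ (Fin d)),
        Tendsto (fun r : ℝ =>
            volume ((graphMap a ⁻¹' E') ∩ ball t₀ r) / volume (ball t₀ r))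
          (𝓝[>] 0) (𝓝 1) →
        HasFDerivAt a (0 : EuclideanSpace ℝ (Fin d) →L[ℝ] EuclideanSpace ℝ (Fin m)) t₀ →
      ∀ (ε : ℝ), 0 < ε →
      ∀ᶠ r in 𝓝[>] (0 : ℝ), ∃ y : Fin d → GraphSpace d m, ∀ i : Fin d,
        y i ∈ (ball (graphMap a t₀) r \ ball (graphMap a t₀) (r / 4)) ∩ E' ∧
        infDist (y i) {z | ∃ s : ℝ, z = graphMap a t₀ +
            s • (WithLp.equiv 2 (EuclideanSpace ℝ (Fin d) × EuclideanSpace ℝ (Fin m))).symm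
              (EuclideanSpace.single i (1 : ℝ), 0)} ≤ C * ε * r := by
  haveI : Nontrivial (EuclideanSpace ℝ (Fin d)) :=
    nontrivial_of_ne (EuclideanSpace.single ⟨0, hd⟩ (1:ℝ)) 0 (by
      intro h
      have := congrArg (fun v : EuclideanSpace ℝ (Fin d) => v ⟨0, hd⟩) h
      simp [EuclideanSpace.single] at this)
  refine ⟨2, by norm_num, 1, by norm_num, ?_⟩
  intro δ hδ hδ1 a ha E' hE' t₀ hDens hDeriv ε hε
  set η : ℝ := min ε (1/24) with hη_def
  have hη : 0 < η := lt_min hε (by norm_num)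
  have hη24 : η ≤ 1/24 := min_le_right _ _
  have hηε : η ≤ ε := min_le_left _ _
  -- derivative estimate
  have hlo := hDeriv.isLittleO
  rw [Asymptotics.isLittleO_iff] at hlo
  have hlo' := hlo hη
  rw [Metric.eventually_nhds_iff] at hlo'
  obtain ⟨ρ, hρ, hest⟩ := hlo'
  -- density estimate
  have hc0 : (0:ℝ) < η ^ d := pow_pos hη d
  have hlt1 : (1 : ENNReal) - ENNReal.ofReal (η ^ d) < 1 :=
    ENNReal.sub_lt_self ENNReal.one_ne_top one_ne_zero (by simpa using hc0)
  have hDens' := hDens.eventually (eventually_gt_nhds hlt1)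
  have hsmall : ∀ᶠ r in 𝓝[>] (0:ℝ), r ∈ Ioo 0 ρ :=
    Ioo_mem_nhdsGT_of_mem ⟨le_refl 0, hρ⟩
  filter_upwards [hDens', hsmall] with r hr1 hr2
  obtain ⟨hr0, hrρ⟩ := hr2
  -- for each i, find a point of F' in the small ball
  have key : ∀ i : Fin d, ∃ t : EuclideanSpace ℝ (Fin d),
      t ∈ graphMap a ⁻¹' E' ∧
      t ∈ ball (t₀ + (3*r/8) • EuclideanSpace.single i (1:ℝ)) (η * r) := by
    intro i
    by_contra hcon
    push_neg at hcon
    set c := t₀ + (3*r/8) • EuclideanSpace.single i (1:ℝ) with hc_def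
    have hsub : ball c (η * r) ⊆ ball t₀ r := by
      intro x hx
      have h1 : dist x t₀ ≤ dist x c + dist c t₀ := dist_triangle _ _ _
      have h2 : dist c t₀ = 3*r/8 := by
        rw [hc_def, dist_eq_norm]
        simp only [add_sub_cancel_left]
        rw [norm_smul, EuclideanSpace.norm_single]
        simp only [norm_one, mul_one, Real.norm_eq_abs]
        rw [abs_of_nonneg (by linarith)]
      have hx' : dist x c < η * r := mem_ball.mp hx
      have : η * r ≤ r/24 := by nlinarith
      rw [mem_ball]
      linarith
    have hdisj : graphMap a ⁻¹' E' ∩ ball t₀ r ⊆ ball t₀ r \ ball c (η*r) := by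
      rintro x ⟨hx1, hx2⟩
      exact ⟨hx2, fun hx3 => hcon x hx1 hx3⟩
    have hmono : volume (graphMap a ⁻¹' E' ∩ ball t₀ r) ≤ volume (ball t₀ r \ ball c (η*r)) :=
      measure_mono hdisj
    have hball : volume (ball t₀ r) = ENNReal.ofReal (r ^ d) *
        volume (ball (0:EuclideanSpace ℝ (Fin d)) 1) := by
      rw [Measure.addHaar_ball _ _ hr0.le, finrank_euclideanSpace_fin]
    have hsball : volume (ball c (η*r)) = ENNReal.ofReal (η^d) * volume (ball t₀ r) := by
      rw [Measure.addHaar_ball _ _ (by positivity : (0:ℝ) ≤ η*r), finrank_euclideanSpace_fin,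
        hball, mul_pow, ENNReal.ofReal_mul (by positivity), mul_assoc]
    have hBne : volume (ball t₀ r) ≠ 0 := (measure_ball_pos _ _ hr0).ne'
    have hBtop : volume (ball t₀ r) ≠ ⊤ := measure_ball_lt_top.ne
    have hdiff : volume (ball t₀ r \ ball c (η*r)) =
        volume (ball t₀ r) - ENNReal.ofReal (η^d) * volume (ball t₀ r) := by
      rw [measure_diff hsub measurableSet_ball.nullMeasurableSet
        (by rw [hsball]; exact ENNReal.mul_ne_top ENNReal.ofReal_ne_top hBtop), hsball]
    have hle : volume (graphMap a ⁻¹' E' ∩ ball t₀ r) ≤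
        (1 - ENNReal.ofReal (η^d)) * volume (ball t₀ r) := by
      rw [ENNReal.sub_mul (fun _ _ => hBtop), one_mul]
      exact hmono.trans (le_of_eq hdiff)
    have hgt : (1 - ENNReal.ofReal (η^d)) * volume (ball t₀ r) <
        volume (graphMap a ⁻¹' E' ∩ ball t₀ r) := by
      rw [← ENNReal.lt_div_iff_mul_lt (Or.inl hBne) (Or.inl hBtop)]
      exact hr1
    exact absurd (hgt.trans_le hle) (lt_irrefl _)
  choose t ht htball using key
  refine ⟨fun i => graphMap a (t i), fun i => ?_⟩
  -- basic estimates on t i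
  have hdist_c : dist (t i) (t₀ + (3*r/8) • EuclideanSpace.single i (1:ℝ)) < η * r :=
    mem_ball.mp (htball i)
  have hd38 : dist (t₀ + (3*r/8) • EuclideanSpace.single i (1:ℝ)) t₀ = 3*r/8 := by
    rw [dist_eq_norm]
    simp only [add_sub_cancel_left]
    rw [norm_smul, EuclideanSpace.norm_single]
    simp only [norm_one, mul_one, Real.norm_eq_abs]
    rw [abs_of_nonneg (by linarith)]
  have hηr : η * r ≤ r/24 := by nlinarith
  have hdt_ub : dist (t i) t₀ ≤ 5*r/12 := by
    have := dist_triangle (t i) (t₀ + (3*r/8) • EuclideanSpace.single i (1:ℝ)) t₀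
    rw [hd38] at this; linarith
  have hdt_lb : r/3 ≤ dist (t i) t₀ := by
    have h1 := dist_triangle (t₀ + (3*r/8) • EuclideanSpace.single i (1:ℝ)) (t i) t₀
    rw [dist_comm (t₀ + _) (t i), hd38] at h1
    linarith
  have hda : dist (a (t i)) (a t₀) ≤ η * dist (t i) t₀ := by
    have h2 := hest (show dist (t i) t₀ < ρ by linarith)
    simp only [ContinuousLinearMap.zero_apply, sub_zero] at h2
    rw [dist_eq_norm, dist_eq_norm]
    exact h2
  have hda' : dist (a (t i)) (a t₀) ≤ dist (t i) t₀ :=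
    hda.trans (by nlinarith [dist_nonneg (x := t i) (y := t₀)])
  have hdistAB : dist (graphMap a (t i)) (graphMap a t₀) =
      Real.sqrt (dist (t i) t₀ ^ 2 + dist (a (t i)) (a t₀) ^ 2) := by
    rw [WithLp.prod_dist_eq_of_L2]; rfl
  have hdnn := dist_nonneg (x := t i) (y := t₀)
  have hann := dist_nonneg (x := a (t i)) (y := a t₀)
  refine ⟨⟨⟨?_, ?_⟩, ht i⟩, ?_⟩
  · -- in ball r
    rw [mem_ball, hdistAB]
    rw [show r = Real.sqrt (r^2) from (Real.sqrt_sq hr0.le).symm]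
    apply Real.sqrt_lt_sqrt (by positivity)
    nlinarith
  · -- not in ball r/4
    rw [mem_ball, not_lt, hdistAB]
    rw [show (r/4 : ℝ) = Real.sqrt ((r/4)^2) from (Real.sqrt_sq (by linarith)).symm]
    apply Real.sqrt_le_sqrt
    nlinarith
  · -- close to the line
    set v : GraphSpace d m := (WithLp.equiv 2
      (EuclideanSpace ℝ (Fin d) × EuclideanSpace ℝ (Fin m))).symm
      (EuclideanSpace.single i (1 : ℝ), 0) with hv
    have hzmem : graphMap a t₀ + (3*r/8) • v ∈
        {z | ∃ s : ℝ, z = graphMap a t₀ + s • v} := ⟨3*r/8, rfl⟩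
    refine (infDist_le_dist_of_mem hzmem).trans ?_
    have hz2 : (graphMap a t₀ + (3*r/8) • v).snd = a t₀ := by
      show a t₀ + (3*r/8) • (0 : EuclideanSpace ℝ (Fin m)) = a t₀
      rw [smul_zero, add_zero]
    have hdz : dist (graphMap a (t i)) (graphMap a t₀ + (3*r/8) • v) =
        Real.sqrt (dist (t i) (t₀ + (3*r/8) • EuclideanSpace.single i (1:ℝ)) ^ 2 +
          dist (a (t i)) (a t₀) ^ 2) := by
      rw [WithLp.prod_dist_eq_of_L2, hz2]
      rfl
    rw [hdz]
    have h1 : dist (t i) (t₀ + (3*r/8) • EuclideanSpace.single i (1:ℝ)) ≤ ε * r := by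
      have : η * r ≤ ε * r := by nlinarith
      linarith
    have h2 : dist (a (t i)) (a t₀) ≤ ε * r := by
      have : η * dist (t i) t₀ ≤ ε * r := by nlinarith
      linarith
    rw [show (2 * ε * r : ℝ) = Real.sqrt ((2*ε*r)^2) from
      (Real.sqrt_sq (by positivity)).symm]
    apply Real.sqrt_le_sqrt
    have hd1 := dist_nonneg (x := t i) (y := t₀ + (3*r/8) • EuclideanSpace.single i (1:ℝ))
    nlinarith
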